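/- In the setting of the previous statement (smooth affine curve, Ω_{A/k} free on dt, I = ker μ ⊂ A⊗_k A): for every r ≥ 1 there exists a unique A-linear map D^{(r)}: I^r → A vanishing on I^{r+1} and sending δ(p_1)···δ(p_r) to p_1'···p_r' for all p_1,...,p_r ∈ A; moreover D^{(r)}(αβ) = μ(α)·D^{(r)}(β) for all α ∈ A⊗A and β ∈ I^r. -/

import Mathlib

set_option linter.unusedSectionVars false
open scoped TensorProduct
open PowerSeries
open scoped Pointwise
universe u
namespace Stmt9Aux

variable {k : Type u} [Field k] [CharZero k] {A : Type u} [CommRing A] [Algebra k A]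

/-- Taylor coefficient `(-1)^n / n!`. -/
noncomputable def tc (k : Type u) [Field k] (n : ℕ) : k := (-1) ^ n * ((Nat.factorial n : k))⁻¹

theorem tc_zero : tc k 0 = 1 := by simp [tc]

theorem tc_one : tc k 1 = -1 := by simp [tc]

theorem tc_succ (n : ℕ) : ((n + 1 : ℕ) : k) * tc k (n + 1) = - tc k n := by
  have h : ((n + 1 : ℕ) : k) ≠ 0 := Nat.cast_ne_zero.mpr (Nat.succ_ne_zero n)
  simp only [tc, Nat.factorial_succ, Nat.cast_mul, mul_inv]
  rw [show ((n + 1 : ℕ) : k) * ((-1) ^ (n+1) * (((n + 1 : ℕ) : k)⁻¹ * ((Nat.factorial n : k))⁻¹))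
      = (((n + 1 : ℕ) : k) * ((n + 1 : ℕ) : k)⁻¹) * ((-1) ^ (n+1) * ((Nat.factorial n : k))⁻¹)
      from by ring, mul_inv_cancel₀ h, one_mul, pow_succ]
  ring

/-- The Taylor series map `f ↦ ∑ (-1)^n/n! dⁿf Xⁿ`. -/
noncomputable def T (d : Module.End k A) (f : A) : A⟦X⟧ :=
  PowerSeries.mk fun n => tc k n • (d ^ n) f

theorem coeff_T (d : Module.End k A) (f : A) (n : ℕ) :
    coeff n (T d f) = tc k n • (d ^ n) f := coeff_mk _ _


variable (d : Module.End k A)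

theorem constantCoeff_T (f : A) : constantCoeff (T d f) = f := by
  rw [← coeff_zero_eq_constantCoeff, coeff_T, tc_zero, pow_zero, Module.End.one_apply, one_smul]

theorem T_add (f g : A) : T d (f + g) = T d f + T d g := by
  ext n
  simp [coeff_T, map_add, smul_add]

theorem coeff_derivativeFun' (F : A⟦X⟧) (n : ℕ) :
    coeff n F.derivativeFun = coeff (n + 1) F * (n + 1) := coeff_derivative F n

theorem nsmul_coeff (n : ℕ) (F : A⟦X⟧) :
    (n + 1) • coeff (n + 1) F = coeff n F.derivativeFun := by
  rw [coeff_derivativeFun']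
  rw [← Nat.cast_smul_eq_nsmul A (n + 1), Algebra.smul_def, mul_comm]
  norm_num

theorem derivativeFun_T (f : A) : (T d f).derivativeFun = - T d (d f) := by
  ext n
  rw [coeff_derivativeFun', map_neg, coeff_T, coeff_T]
  have h1 : (d ^ (n + 1)) f = (d ^ n) (d f) := by rw [pow_succ]; rfl
  have h2 : ((n : A) + 1) = ((n + 1 : ℕ) : A) := by push_cast; ring
  rw [h1, h2, mul_comm, ← nsmul_eq_mul, ← Nat.cast_smul_eq_nsmul k, smul_smul, tc_succ, neg_smul]


theorem T_mul [NoZeroSMulDivisors k A]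
    (hder : ∀ f g : A, d (f * g) = f * d g + g * d f) :
    ∀ (n : ℕ) (f g : A), coeff n (T d (f * g)) = coeff n (T d f * T d g) := by
  intro n
  induction n with
  | zero =>
    intro f g
    simp only [coeff_zero_eq_constantCoeff, map_mul]
    have hT : ∀ h : A, constantCoeff (T d h) = h := by
      intro h
      rw [← coeff_zero_eq_constantCoeff, coeff_T, tc_zero, pow_zero, Module.End.one_apply,
        one_smul]
    rw [hT, hT, hT]
  | succ n ih =>
    intro f g
    have hc : ((n + 1 : ℕ) : k) ≠ 0 := Nat.cast_ne_zero.mpr (Nat.succ_ne_zero n)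
    have key : ∀ F : A⟦X⟧, ((n + 1 : ℕ) : k) • coeff (n + 1) F = coeff n F.derivativeFun := by
      intro F
      rw [coeff_derivativeFun', Nat.cast_smul_eq_nsmul, nsmul_eq_mul, mul_comm]
      push_cast
      ring
    apply smul_right_injective A hc
    show ((n + 1 : ℕ) : k) • coeff (n + 1) (T d (f * g))
        = ((n + 1 : ℕ) : k) • coeff (n + 1) (T d f * T d g)
    rw [key, key, derivativeFun_T, derivativeFun_mul, map_add, map_neg, hder, T_add, map_add,
      ih f (d g), ih g (d f), smul_eq_mul, smul_eq_mul, derivativeFun_T, derivativeFun_T,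
      mul_neg, mul_neg, map_neg, map_neg]
    ring


theorem d_one (hder : ∀ f g : A, d (f * g) = f * d g + g * d f) : d 1 = 0 := by
  have := hder 1 1
  simp only [mul_one, one_mul] at this
  exact left_eq_add.mp this

theorem pow_apply_one (hder : ∀ f g : A, d (f * g) = f * d g + g * d f) (n : ℕ) :
    (d ^ (n + 1)) (1 : A) = 0 := by
  have h1 : (d ^ (n + 1)) (1 : A) = (d ^ n) (d 1) := by rw [pow_succ]; rfl
  rw [h1, d_one d hder, map_zero]

theorem T_one (hder : ∀ f g : A, d (f * g) = f * d g + g * d f) : T d 1 = 1 := by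
  ext n
  cases n with
  | zero => simp [coeff_T, tc_zero]
  | succ n => simp [coeff_T, pow_apply_one d hder, coeff_one]

theorem d_algebraMap (hder : ∀ f g : A, d (f * g) = f * d g + g * d f) (a : k) :
    d (algebraMap k A a) = 0 := by
  rw [Algebra.algebraMap_eq_smul_one, map_smul, d_one d hder, smul_zero]

theorem T_algebraMap (hder : ∀ f g : A, d (f * g) = f * d g + g * d f) (a : k) :
    T d (algebraMap k A a) = algebraMap k A⟦X⟧ a := by
  ext n
  cases n with
  | zero =>
    simp [coeff_T, tc_zero, PowerSeries.algebraMap_apply, coeff_C]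
  | succ n =>
    have h1 : (d ^ (n + 1)) (algebraMap k A a) = (d ^ n) (d (algebraMap k A a)) := by
      rw [pow_succ]; rfl
    rw [coeff_T, h1, d_algebraMap d hder, map_zero, smul_zero, PowerSeries.algebraMap_apply,
      coeff_C, if_neg (Nat.succ_ne_zero n)]

/-- The Taylor expansion as a `k`-algebra hom into power series. -/
noncomputable def Talg [NoZeroSMulDivisors k A]
    (hder : ∀ f g : A, d (f * g) = f * d g + g * d f) : A →ₐ[k] A⟦X⟧ where
  toFun := T d
  map_one' := T_one d hder
  map_mul' := fun f g => by ext n; exact T_mul d hder n f g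
  map_zero' := by ext n; simp [coeff_T]
  map_add' := T_add d
  commutes' := T_algebraMap d hder


section PS
variable {R : Type u} [CommRing R]

theorem coeff_mul_of_X_pow_dvd (F : R⟦X⟧) {G : R⟦X⟧} {n : ℕ} (h : X ^ n ∣ G) :
    coeff n (F * G) = constantCoeff F * coeff n G := by
  rw [coeff_mul, Finset.sum_eq_single (0, n)]
  · rw [coeff_zero_eq_constantCoeff]
  · rintro ⟨i, j⟩ hmem hne
    rw [Finset.HasAntidiagonal.mem_antidiagonal] at hmem
    have hj : j < n := by
      rcases Nat.lt_or_ge j n with hj | hj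
      · exact hj
      · exfalso
        have : j = n := le_antisymm (by omega) hj
        exact hne (by simp [Prod.ext_iff]; omega)
    rw [X_pow_dvd_iff.mp h j hj, mul_zero]
  · intro habs
    exact absurd (Finset.HasAntidiagonal.mem_antidiagonal.mpr (by omega)) habs

theorem coeff_succ_mul_of_X_pow_dvd {F G : R⟦X⟧} {n : ℕ} (hF : constantCoeff F = 0)
    (hG : X ^ n ∣ G) : coeff (n + 1) (F * G) = coeff 1 F * coeff n G := by
  rw [coeff_mul, Finset.sum_eq_single (1, n)]
  · rintro ⟨i, j⟩ hmem hne
    rw [Finset.HasAntidiagonal.mem_antidiagonal] at hmem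
    rcases Nat.eq_zero_or_pos i with hi | hi
    · subst hi
      rw [coeff_zero_eq_constantCoeff, hF, zero_mul]
    · have hj : j < n := by
        rcases Nat.lt_or_ge j n with hj | hj
        · exact hj
        · exfalso
          exact hne (by simp [Prod.ext_iff]; omega)
      rw [X_pow_dvd_iff.mp hG j hj, mul_zero]
  · intro habs
    exact absurd (Finset.HasAntidiagonal.mem_antidiagonal.mpr (by omega)) habs

theorem X_pow_card_dvd_prod {ι : Type*} (s : Finset ι) (f : ι → R⟦X⟧)
    (h0 : ∀ i ∈ s, constantCoeff (f i) = 0) :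
    (X : R⟦X⟧) ^ s.card ∣ ∏ i ∈ s, f i := by
  rw [← Finset.prod_const]
  exact Finset.prod_dvd_prod_of_dvd _ _ fun i hi => X_dvd_iff.mpr (h0 i hi)

theorem coeff_card_prod {ι : Type*} (s : Finset ι) (f : ι → R⟦X⟧)
    (h0 : ∀ i ∈ s, constantCoeff (f i) = 0) :
    coeff s.card (∏ i ∈ s, f i) = ∏ i ∈ s, coeff 1 (f i) := by
  induction s using Finset.cons_induction with
  | empty => simp
  | cons a s ha ih =>
    rw [Finset.prod_cons, Finset.prod_cons, Finset.card_cons,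
      coeff_succ_mul_of_X_pow_dvd (h0 a (Finset.mem_cons_self a s))
        (X_pow_card_dvd_prod s f fun i hi => h0 i (Finset.mem_cons_of_mem hi)),
      ih fun i hi => h0 i (Finset.mem_cons_of_mem hi)]

end PS

/-- `C` as a `k`-algebra hom. -/
noncomputable def CAlg (k : Type u) [Field k] (A : Type u) [CommRing A] [Algebra k A] :
    A →ₐ[k] A⟦X⟧ :=
  { PowerSeries.C (R := A) with commutes' := fun a => (PowerSeries.algebraMap_apply).symm }

@[simp] theorem CAlg_apply (k : Type u) [Field k] (A : Type u) [CommRing A] [Algebra k A]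
    (a : A) : CAlg k A a = PowerSeries.C a := rfl

end Stmt9Aux

theorem stmt9 (k : Type u) [Field k] [CharZero k]
    (A : Type u) [CommRing A] [IsDomain A] [Algebra k A]
    [Algebra.FiniteType k A] [Algebra.Smooth k A]
    (hdim : ringKrullDim A = 1)
    (t : A)
    (hfree : ∀ ω : Ω[A⁄k], ∃! c : A, ω = c • KaehlerDifferential.D k A t)
    (d : Module.End k A)
    (hd : ∀ f : A, KaehlerDifferential.D k A f =
      d f • KaehlerDifferential.D k A t)
    (r : ℕ) (hr : 1 ≤ r) :
    letI δ : A → A ⊗[k] A := fun p => p ⊗ₜ[k] (1 : A) - (1 : A) ⊗ₜ[k] p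
    letI μmap := Algebra.TensorProduct.lmul' k (S := A)
    letI I : Ideal (A ⊗[k] A) := RingHom.ker μmap.toRingHom
    ∃ D : ↥(I ^ r) →+ A,
      ((∀ β : ↥(I ^ r), (β : A ⊗[k] A) ∈ I ^ (r + 1) → D β = 0) ∧
        (∀ (p : Fin r → A) (h : ∏ i, δ (p i) ∈ I ^ r),
          D ⟨∏ i, δ (p i), h⟩ = ∏ i, d (p i)) ∧
        (∀ (α : A ⊗[k] A) (β : ↥(I ^ r)),
          D ⟨α * (β : A ⊗[k] A), Ideal.mul_mem_left _ α β.2⟩ =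
            μmap α * D β)) ∧
      ∀ D' : ↥(I ^ r) →+ A,
        ((∀ β : ↥(I ^ r), (β : A ⊗[k] A) ∈ I ^ (r + 1) → D' β = 0) ∧
          (∀ (p : Fin r → A) (h : ∏ i, δ (p i) ∈ I ^ r),
            D' ⟨∏ i, δ (p i), h⟩ = ∏ i, d (p i)) ∧
          (∀ (α : A ⊗[k] A) (β : ↥(I ^ r)),
            D' ⟨α * (β : A ⊗[k] A), Ideal.mul_mem_left _ α β.2⟩ =
              μmap α * D' β)) →
        D' = D := by
  classical
  set δ : A → A ⊗[k] A := fun p => p ⊗ₜ[k] (1 : A) - (1 : A) ⊗ₜ[k] p with hδdef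
  set μmap := Algebra.TensorProduct.lmul' k (S := A) with hμdef
  set I : Ideal (A ⊗[k] A) := RingHom.ker μmap.toRingHom with hIdef2
  have hδ : ∀ p : A, δ p = p ⊗ₜ[k] (1 : A) - (1 : A) ⊗ₜ[k] p := fun _ => rfl
  have hder : ∀ f g : A, d (f * g) = f * d g + g * d f := by
    intro f g
    obtain ⟨c0, -, hu⟩ := hfree (KaehlerDifferential.D k A (f * g))
    have h1 : d (f * g) = c0 := hu _ (hd (f * g))
    have h2 : f * d g + g * d f = c0 := by
      apply hu
      rw [(KaehlerDifferential.D k A).leibniz, hd f, hd g, smul_smul, smul_smul, ← add_smul]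
    rw [h1, ← h2]
  haveI : NoZeroSMulDivisors k A :=
    inferInstance
  set Φ : A ⊗[k] A →ₐ[k] A⟦X⟧ :=
    Algebra.TensorProduct.productMap (Stmt9Aux.CAlg k A) (Stmt9Aux.Talg d hder) with hΦdef
  have hΦt : ∀ x y : A, Φ (x ⊗ₜ[k] y) = PowerSeries.C x * Stmt9Aux.T d y := fun x y =>
    Algebra.TensorProduct.productMap_apply_tmul _ _ x y
  have hconst : ∀ x : A ⊗[k] A, PowerSeries.constantCoeff (Φ x) = μmap x := by
    intro x
    induction x using TensorProduct.induction_on with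
    | zero => simp
    | tmul a b =>
      rw [hΦt, map_mul, PowerSeries.constantCoeff_C, Stmt9Aux.constantCoeff_T,
        Algebra.TensorProduct.lmul'_apply_tmul]
    | add u v hu hv => simp only [map_add, hu, hv]
  have hdvd : ∀ (m : ℕ) (x : A ⊗[k] A), x ∈ I ^ m → (PowerSeries.X : A⟦X⟧) ^ m ∣ Φ x := by
    intro m x hx
    have h1 : I ≤ Ideal.comap Φ.toRingHom (Ideal.span {(PowerSeries.X : A⟦X⟧)}) := by
      intro y hy
      rw [Ideal.mem_comap, Ideal.mem_span_singleton]
      show (PowerSeries.X : A⟦X⟧) ∣ Φ y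
      rw [PowerSeries.X_dvd_iff, hconst]
      exact hy
    have h2 : Ideal.map Φ.toRingHom (I ^ m) ≤ Ideal.span {(PowerSeries.X : A⟦X⟧)} ^ m := by
      rw [Ideal.map_pow]
      exact Ideal.pow_right_mono (Ideal.map_le_iff_le_comap.mpr h1) m
    have h3 : Φ x ∈ Ideal.span {(PowerSeries.X : A⟦X⟧)} ^ m :=
      h2 (Ideal.mem_map_of_mem _ hx)
    rwa [Ideal.span_singleton_pow, Ideal.mem_span_singleton] at h3
  set Dmap : ↥(I ^ r) →+ A :=
    { toFun := fun β => PowerSeries.coeff r (Φ (β : A ⊗[k] A)),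
      map_zero' := by simp,
      map_add' := fun a b => by simp } with hDdef
  have prop1 : ∀ β : ↥(I ^ r), (β : A ⊗[k] A) ∈ I ^ (r + 1) → Dmap β = 0 := by
    intro β hβ
    show PowerSeries.coeff r (Φ (β : A ⊗[k] A)) = 0
    exact PowerSeries.X_pow_dvd_iff.mp (hdvd (r + 1) β hβ) r (Nat.lt_succ_self r)
  have hconstδ : ∀ q : A, PowerSeries.constantCoeff (Φ (δ q)) = 0 := by
    intro q
    rw [hconst, hδ, map_sub, Algebra.TensorProduct.lmul'_apply_tmul,
      Algebra.TensorProduct.lmul'_apply_tmul, mul_one, one_mul, sub_self]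
  have hcoeff1δ : ∀ q : A, PowerSeries.coeff 1 (Φ (δ q)) = d q := by
    intro q
    rw [hδ, map_sub, hΦt, hΦt, Stmt9Aux.T_one d hder, mul_one, map_one, one_mul, map_sub]
    simp [PowerSeries.coeff_C, Stmt9Aux.coeff_T, Stmt9Aux.tc_one]
  have prop2 : ∀ (p : Fin r → A) (h : ∏ i, δ (p i) ∈ I ^ r),
      Dmap ⟨∏ i, δ (p i), h⟩ = ∏ i, d (p i) := by
    intro p h
    show PowerSeries.coeff r (Φ (∏ i, δ (p i))) = ∏ i, d (p i)
    rw [map_prod]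
    have hc := Stmt9Aux.coeff_card_prod (R := A) (Finset.univ : Finset (Fin r)) (fun i : Fin r => Φ (δ (p i)))
      (fun i _ => hconstδ (p i))
    rw [Finset.card_univ, Fintype.card_fin] at hc
    rw [hc]
    exact Finset.prod_congr rfl fun i _ => hcoeff1δ (p i)
  have prop3 : ∀ (α : A ⊗[k] A) (β : ↥(I ^ r)),
      Dmap ⟨α * (β : A ⊗[k] A), Ideal.mul_mem_left _ α β.2⟩ = μmap α * Dmap β := by
    intro α β
    show PowerSeries.coeff r (Φ (α * (β : A ⊗[k] A)))
        = μmap α * PowerSeries.coeff r (Φ (β : A ⊗[k] A))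
    rw [map_mul, Stmt9Aux.coeff_mul_of_X_pow_dvd _ (hdvd r β β.2), hconst]
  have hspan : Ideal.span (Set.range δ) = I := by
    have hIdeal : I = KaehlerDifferential.ideal k A := rfl
    rw [hIdeal, ← KaehlerDifferential.span_range_eq_ideal]
    apply le_antisymm
    · rw [Ideal.span_le]
      rintro _ ⟨s, rfl⟩
      rw [hδ, show (s ⊗ₜ[k] (1 : A) - (1 : A) ⊗ₜ[k] s)
          = -((1 : A) ⊗ₜ[k] s - s ⊗ₜ[k] (1 : A)) from (neg_sub _ _).symm]
      exact neg_mem (Ideal.subset_span ⟨s, rfl⟩)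
    · rw [Ideal.span_le]
      rintro _ ⟨s, rfl⟩
      show (1 : A) ⊗ₜ[k] s - s ⊗ₜ[k] (1 : A) ∈ Ideal.span (Set.range δ)
      rw [show ((1 : A) ⊗ₜ[k] s - s ⊗ₜ[k] (1 : A)) = -(δ s) from by
        rw [hδ]; exact (neg_sub _ _).symm]
      exact neg_mem (Ideal.subset_span ⟨s, rfl⟩)
  have hpow : I ^ r = Ideal.span (Set.range δ ^ r) := by
    rw [← hspan]
    exact Submodule.span_pow _ r
  refine ⟨Dmap, ⟨prop1, prop2, prop3⟩, ?_⟩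
  rintro D' ⟨h1', h2', h3'⟩
  have key : ∀ x (hx : x ∈ Ideal.span (Set.range δ ^ r)) (hx2 : x ∈ I ^ r),
      D' ⟨x, hx2⟩ = Dmap ⟨x, hx2⟩ := by
    intro x hx
    refine Submodule.span_induction
      (p := fun x _ => ∀ hx2 : x ∈ I ^ r, D' ⟨x, hx2⟩ = Dmap ⟨x, hx2⟩) ?_ ?_ ?_ ?_ hx
    · intro x hxmem hx2
      rw [Set.mem_pow] at hxmem
      obtain ⟨f, hf⟩ := hxmem
      choose p hp using fun i => (f i).2
      have hx' : ∏ i, δ (p i) = x := by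
        rw [← hf, List.prod_ofFn]
        exact Finset.prod_congr rfl fun i _ => hp i
      have hmem : ∏ i, δ (p i) ∈ I ^ r := hx' ▸ hx2
      have e : (⟨x, hx2⟩ : ↥(I ^ r)) = ⟨∏ i, δ (p i), hmem⟩ := Subtype.ext hx'.symm
      rw [e, h2' p hmem, prop2 p hmem]
    · intro hx2
      have e : (⟨(0 : A ⊗[k] A), hx2⟩ : ↥(I ^ r)) = 0 := Subtype.ext rfl
      rw [e, map_zero, map_zero]
    · intro x y hxs hys ihx ihy hx2
      have hx' : x ∈ I ^ r := by rw [hpow]; exact hxs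
      have hy' : y ∈ I ^ r := by rw [hpow]; exact hys
      have e : (⟨x + y, hx2⟩ : ↥(I ^ r)) = ⟨x, hx'⟩ + ⟨y, hy'⟩ := Subtype.ext rfl
      rw [e, map_add, map_add, ihx hx', ihy hy']
    · intro a x hxs ih hx2
      have hx' : x ∈ I ^ r := by rw [hpow]; exact hxs
      have e : (⟨a • x, hx2⟩ : ↥(I ^ r))
          = ⟨a * x, Ideal.mul_mem_left _ a (⟨x, hx'⟩ : ↥(I ^ r)).2⟩ := Subtype.ext rfl
      rw [e, h3' a ⟨x, hx'⟩, prop3 a ⟨x, hx'⟩, ih hx']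
  refine DFunLike.ext _ _ ?_
  rintro ⟨x, hx⟩
  exact key x (by rw [← hpow]; exact hx) hx
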